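/- Let P be a finite poset and let g : L(P) → {0,…,m} be a function such that for all incomparable order ideals α, β, the multiset {g(α), g(β)} equals the multiset {g(α∪β), g(α∩β)}. Then there exist a chain C = {c₁ < ⋯ < c_ℓ} in P and a function f on the initial segments {C₀,…,C_ℓ} of C such that g(α) = f(α ∩ C) for every order ideal α of P. -/

import Mathlib

set_option linter.unusedSectionVars false

namespace HibiChainAux

variable {P : Type*} [PartialOrder P] [Fintype P] {m : ℕ}

lemma pair_cases {a b c d : Fin (m + 1)}
    (h : ({a, b} : Multiset (Fin (m + 1))) = {c, d}) :
    (a = c ∧ b = d) ∨ (a = d ∧ b = c) := by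
  by_cases hac : a = c
  · subst hac
    left
    refine ⟨rfl, ?_⟩
    have h' : a ::ₘ ({b} : Multiset (Fin (m+1))) = a ::ₘ {d} := by
      simpa [Multiset.insert_eq_cons] using h
    have := (Multiset.cons_inj_right a).mp h'
    simpa using this
  · right
    have ha : a ∈ ({c, d} : Multiset (Fin (m+1))) := by
      rw [← h]; simp
    have had : a = d := by
      rcases Multiset.mem_cons.mp ha with h1 | h1
      · exact absurd h1 hac
      · simpa using h1
    refine ⟨had, ?_⟩
    have hc : c ∈ ({a, b} : Multiset (Fin (m+1))) := by
      rw [h]; simp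
    rcases Multiset.mem_cons.mp hc with h1 | h1
    · exact absurd h1.symm hac
    · exact (Multiset.mem_singleton.mp h1).symm

variable (g : LowerSet P → Fin (m + 1))
variable (hg : ∀ α β : LowerSet P, ¬ α ≤ β → ¬ β ≤ α →
      ({g α, g β} : Multiset (Fin (m + 1))) = {g (α ⊔ β), g (α ⊓ β)})

include hg in
/-- Descent lemma: whether adding `x` on top of a valid ideal `γ` changes the value of `g`
depends only on `x` (it is equivalent to the same statement at the minimal ideal `Iio x`). -/
lemma key (x : P) : ∀ n (γ : LowerSet P), ((γ : Set P) \ Set.Iio x).ncard = n →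
    LowerSet.Iio x ≤ γ → x ∉ γ →
    (g (γ ⊔ LowerSet.Iic x) = g γ ↔ g (LowerSet.Iic x) = g (LowerSet.Iio x)) := by
  intro n
  induction n using Nat.strong_induction_on with
  | _ n IH =>
    intro γ hcard hle hx
    by_cases hd : ((γ : Set P) \ Set.Iio x) = ∅
    · -- base case: γ = Iio x
      have hsub : (γ : Set P) ⊆ Set.Iio x := Set.diff_eq_empty.mp hd
      have hγ : γ = LowerSet.Iio x := by
        apply SetLike.coe_injective
        exact le_antisymm hsub (by simpa using (LowerSet.coe_subset_coe.mpr hle))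
      subst hγ
      rw [sup_eq_right.mpr (by intro z hz; exact le_of_lt hz : LowerSet.Iio x ≤ LowerSet.Iic x)]
    · -- pick a maximal element y of the difference
      have hfin : ((γ : Set P) \ Set.Iio x).Finite := Set.toFinite _
      obtain ⟨y0, hy0⟩ := Set.nonempty_iff_ne_empty.mpr hd
      obtain ⟨y, -, hymax⟩ := hfin.exists_le_maximal hy0
      have hyγ : y ∈ (γ : Set P) := hymax.prop.1
      have hyx : ¬ y < x := hymax.prop.2
      have hyne : y ≠ x := fun h => hx (h ▸ hyγ)
      -- y is maximal in γ
      have hymaxγ : ∀ z ∈ (γ : Set P), ¬ y < z := by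
        intro z hz hlt
        have hzx : ¬ z < x := fun h => hyx (hlt.trans h)
        exact (show y < z from hlt).not_ge (hymax.le_of_ge ⟨hz, hzx⟩ (show y < z from hlt).le)
      -- the ideal with y removed
      have hls : IsLowerSet ((γ : Set P) \ {y}) := by
        intro a b hba ha
        refine ⟨γ.lower hba ha.1, ?_⟩
        intro hb
        rcases eq_or_lt_of_le hba with h | h
        · exact ha.2 (hb ▸ h.symm ▸ rfl)
        · exact hymaxγ a ha.1 (hb ▸ h)
      set γ' : LowerSet P := ⟨(γ : Set P) \ {y}, hls⟩ with hγ'def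
      have hcγ' : (γ' : Set P) = (γ : Set P) \ {y} := rfl
      have hle' : LowerSet.Iio x ≤ γ' := by
        intro z hz
        have hz' : z < x := hz
        exact ⟨hle hz, fun h => hyx (h ▸ hz')⟩
      have hx' : x ∉ γ' := fun h => hx h.1
      have hyγ' : y ∉ (γ' : Set P) := fun h => h.2 rfl
      -- incomparability
      set A : LowerSet P := γ' ⊔ LowerSet.Iic x with hA
      have hxA : x ∈ A := Or.inr (le_refl x)
      have h1 : ¬ A ≤ γ := fun h => hx (h hxA)
      have h2 : ¬ γ ≤ A := by
        intro h
        rcases h hyγ with h' | h'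
        · exact hyγ' h'
        · rcases eq_or_lt_of_le (h' : y ≤ x) with he | hlt
          · exact hyne he
          · exact hyx hlt
      have hsup : A ⊔ γ = γ ⊔ LowerSet.Iic x := by
        apply SetLike.coe_injective
        simp only [LowerSet.coe_sup, hcγ']
        ext z
        simp only [Set.mem_union, Set.mem_diff, Set.mem_singleton_iff]
        constructor
        · rintro ((⟨h, -⟩ | h) | h) <;> tauto
        · rintro (h | h)
          · exact Or.inr h
          · exact Or.inl (Or.inr h)
      have hinf : A ⊓ γ = γ' := by
        apply SetLike.coe_injective
        simp only [LowerSet.coe_inf, LowerSet.coe_sup, hcγ']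
        ext z
        simp only [Set.mem_inter_iff, Set.mem_union, Set.mem_diff, Set.mem_singleton_iff,
          LowerSet.coe_Iic, Set.mem_Iic]
        constructor
        · rintro ⟨h | h, hzγ⟩
          · exact h
          · refine ⟨hzγ, ?_⟩
            intro he
            subst he
            rcases eq_or_lt_of_le h with he | hlt
            · exact hyne he
            · exact hyx hlt
        · intro h
          exact ⟨Or.inl h, h.1⟩
      have hmult := hg A γ h1 h2
      rw [hsup, hinf] at hmult
      -- the measure decreases
      have hmem : y ∈ (γ : Set P) \ Set.Iio x := ⟨hyγ, hyx⟩
      have hd' : ((γ' : Set P) \ Set.Iio x) = ((γ : Set P) \ Set.Iio x) \ {y} := by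
        rw [hcγ']
        ext z
        simp only [Set.mem_diff, Set.mem_singleton_iff]
        tauto
      have hlt : ((γ' : Set P) \ Set.Iio x).ncard < n := by
        rw [hd', ← hcard]
        exact Set.ncard_diff_singleton_lt_of_mem hmem hfin
      have IH' := IH _ hlt γ' rfl hle' hx'
      rcases pair_cases hmult with ⟨e1, e2⟩ | ⟨e1, e2⟩
      · rw [← e1, e2]
        exact IH'
      · exact iff_of_true e2.symm (IH'.mp e1)

/-- The set of "relevant" elements of `P` for the grading `g`. -/
def rel (g : LowerSet P → Fin (m + 1)) : Set P :=
  {x | g (LowerSet.Iic x) ≠ g (LowerSet.Iio x)}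

include hg in
/-- The relevant elements form a chain. -/
lemma rel_chain : IsChain (· ≤ ·) (rel g) := by
  intro p hp q hq hne
  by_contra hc
  push_neg at hc
  obtain ⟨hpq, hqp⟩ := hc
  set α : LowerSet P := LowerSet.Iio p ⊔ LowerSet.Iio q with hα
  have hαp : LowerSet.Iio p ≤ α := le_sup_left
  have hαq : LowerSet.Iio q ≤ α := le_sup_right
  have hpα : p ∉ α := by
    rintro (h | h)
    · exact lt_irrefl p h
    · exact hpq (le_of_lt h)
  have hqα : q ∉ α := by
    rintro (h | h)
    · exact hqp (le_of_lt h)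
    · exact lt_irrefl q h
  have hkp : g (α ⊔ LowerSet.Iic p) ≠ g α := by
    intro h
    exact hp ((key g hg p _ α rfl hαp hpα).mp h)
  have hkq : g (α ⊔ LowerSet.Iic q) ≠ g α := by
    intro h
    exact hq ((key g hg q _ α rfl hαq hqα).mp h)
  set A : LowerSet P := α ⊔ LowerSet.Iic p with hA
  set B : LowerSet P := α ⊔ LowerSet.Iic q with hB
  have hpA : p ∈ A := Or.inr (le_refl p)
  have hqB : q ∈ B := Or.inr (le_refl q)
  have h1 : ¬ A ≤ B := by
    intro h
    rcases h hpA with h' | h'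
    · exact hpα h'
    · exact hpq h'
  have h2 : ¬ B ≤ A := by
    intro h
    rcases h hqB with h' | h'
    · exact hqα h'
    · exact hqp h'
  have hinf : A ⊓ B = α := by
    apply SetLike.coe_injective
    simp only [hA, hB, LowerSet.coe_inf, LowerSet.coe_sup, LowerSet.coe_Iic]
    ext z
    simp only [Set.mem_inter_iff, Set.mem_union, Set.mem_Iic]
    constructor
    · rintro ⟨hzA, hzB⟩
      rcases hzA with h | h
      · exact h
      · rcases hzB with h' | h'
        · exact h'
        · rcases eq_or_lt_of_le h with he | hlt
          · exact absurd (he ▸ h') hpq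
          · exact hαp hlt
    · intro h
      exact ⟨Or.inl h, Or.inl h⟩
  have hmult := hg A B h1 h2
  rw [hinf] at hmult
  rcases pair_cases hmult with ⟨e1, e2⟩ | ⟨e1, e2⟩
  · exact hkq e2
  · exact hkp e1

include hg in
/-- The value of `g` depends only on the intersection with the relevant elements. -/
lemma reduce : ∀ n (α β : LowerSet P), ((α : Set P) \ (β : Set P)).ncard = n →
    β ≤ α → ((α : Set P) ∩ rel g ⊆ (β : Set P)) → g α = g β := by
  intro n
  induction n using Nat.strong_induction_on with
  | _ n IH =>
    intro α β hcard hle hR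
    by_cases hd : ((α : Set P) \ (β : Set P)) = ∅
    · have hsub : (α : Set P) ⊆ (β : Set P) := Set.diff_eq_empty.mp hd
      have : α = β := SetLike.coe_injective
        (le_antisymm hsub (LowerSet.coe_subset_coe.mpr hle))
      rw [this]
    · have hfin : ((α : Set P) \ (β : Set P)).Finite := Set.toFinite _
      obtain ⟨y0, hy0⟩ := Set.nonempty_iff_ne_empty.mpr hd
      obtain ⟨y, -, hymax⟩ := hfin.exists_le_maximal hy0
      have hyα : y ∈ (α : Set P) := hymax.prop.1
      have hyβ : y ∉ (β : Set P) := hymax.prop.2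
      have hyR : y ∉ rel g := fun h => hyβ (hR ⟨hyα, h⟩)
      have hyval : g (LowerSet.Iic y) = g (LowerSet.Iio y) := not_not.mp hyR
      have hymaxα : ∀ z ∈ (α : Set P), ¬ y < z := by
        intro z hz hlt
        have hzβ : z ∉ (β : Set P) := fun h => hyβ (β.lower hlt.le h)
        exact (show y < z from hlt).not_ge (hymax.le_of_ge ⟨hz, hzβ⟩ (show y < z from hlt).le)
      have hls : IsLowerSet ((α : Set P) \ {y}) := by
        intro a b hba ha
        refine ⟨α.lower hba ha.1, ?_⟩
        intro hb
        rcases eq_or_lt_of_le hba with h | h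
        · exact ha.2 (hb ▸ h.symm ▸ rfl)
        · exact hymaxα a ha.1 (hb ▸ h)
      set γ' : LowerSet P := ⟨(α : Set P) \ {y}, hls⟩ with hγ'def
      have hcγ' : (γ' : Set P) = (α : Set P) \ {y} := rfl
      have hleIio : LowerSet.Iio y ≤ γ' := by
        intro z hz
        have hz' : z < y := hz
        exact ⟨α.lower hz'.le hyα, fun h => lt_irrefl y (h ▸ hz')⟩
      have hyγ' : y ∉ γ' := fun h => h.2 rfl
      have hαeq : γ' ⊔ LowerSet.Iic y = α := by
        apply SetLike.coe_injective
        simp only [LowerSet.coe_sup, hcγ', LowerSet.coe_Iic]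
        ext z
        simp only [Set.mem_union, Set.mem_diff, Set.mem_singleton_iff, Set.mem_Iic]
        constructor
        · rintro (⟨h, -⟩ | h)
          · exact h
          · exact α.lower h hyα
        · intro h
          by_cases hz : z = y
          · exact Or.inr (hz ▸ le_refl y)
          · exact Or.inl ⟨h, hz⟩
      have hstep : g α = g γ' := by
        rw [← hαeq]
        exact (key g hg y _ γ' rfl hleIio hyγ').mpr hyval
      have hβγ' : β ≤ γ' := by
        intro z hz
        exact ⟨hle hz, fun h => hyβ (h ▸ hz)⟩
      have hRγ' : (γ' : Set P) ∩ rel g ⊆ (β : Set P) := by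
        intro z hz
        exact hR ⟨hz.1.1, hz.2⟩
      have hd' : ((γ' : Set P) \ (β : Set P)) = (((α : Set P) \ (β : Set P)) \ {y}) := by
        rw [hcγ']
        ext z
        simp only [Set.mem_diff, Set.mem_singleton_iff]
        tauto
      have hlt : ((γ' : Set P) \ (β : Set P)).ncard < n := by
        rw [hd', ← hcard]
        exact Set.ncard_diff_singleton_lt_of_mem ⟨hyα, hyβ⟩ hfin
      rw [hstep]
      exact IH _ hlt γ' β rfl hβγ' hRγ'

end HibiChainAux

open HibiChainAux in
/-- Every standard multigrading making the Hibi ideal homogeneous is induced by a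
chain: if `g : LowerSet P → {0,…,m}` satisfies, for all incomparable order ideals
`α, β`, that the multiset `{g α, g β}` equals `{g (α ⊔ β), g (α ⊓ β)}`, then there
exist a chain `c : Fin ℓ → P` (strictly monotone) and a function `f` on subsets of
`P` such that `g α = f (α ∩ C)` for every order ideal `α`. -/
theorem multigrading_induced_by_chain
    (P : Type*) [PartialOrder P] [Fintype P] (m : ℕ)
    (g : LowerSet P → Fin (m + 1))
    (hg : ∀ α β : LowerSet P, ¬ α ≤ β → ¬ β ≤ α →
      ({g α, g β} : Multiset (Fin (m + 1))) = {g (α ⊔ β), g (α ⊓ β)}) :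
    ∃ (ℓ : ℕ) (c : Fin ℓ → P), StrictMono c ∧
      ∃ f : Set P → Fin (m + 1),
        ∀ α : LowerSet P, g α = f ((α : Set P) ∩ Set.range c) := by
  classical
  set R : Set P := rel g with hRdef
  have hchain : IsChain (· ≤ ·) R := rel_chain g hg
  letI : Fintype ↥R := Fintype.ofFinite _
  letI : LinearOrder ↥R :=
    { (inferInstance : PartialOrder ↥R) with
      le_total := fun a b => by
        rcases eq_or_ne (a : P) (b : P) with h | h
        · exact Or.inl (le_of_eq (Subtype.ext h))
        · rcases hchain a.2 b.2 h with h' | h'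
          · exact Or.inl h'
          · exact Or.inr h'
      toDecidableLE := Classical.decRel _ }
  set ℓ : ℕ := Fintype.card ↥R with hℓ
  let e := monoEquivOfFin ↥R (rfl : Fintype.card ↥R = ℓ)
  refine ⟨ℓ, fun i => (e i : P), ?_, ?_⟩
  · intro i j hij
    exact Subtype.coe_lt_coe.mpr (e.strictMono hij)
  · have hrange : Set.range (fun i => (e i : P)) = R := by
      have h1 : Set.range (fun i => (e i : P)) = Subtype.val '' Set.range (⇑e) :=
        Set.range_comp _ _
      rw [h1, e.surjective.range_eq, Set.image_univ, Subtype.range_coe]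
    refine ⟨fun S => g (lowerClosure S), fun α => ?_⟩
    rw [hrange]
    have hle : lowerClosure ((α : Set P) ∩ R) ≤ α :=
      lowerClosure_le.mpr Set.inter_subset_left
    have hsub : (α : Set P) ∩ rel g ⊆ (lowerClosure ((α : Set P) ∩ R) : Set P) :=
      subset_lowerClosure
    exact reduce g hg _ α _ rfl hle hsub
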